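/- For every partition λ, (σ∘π)²(λ) = λ; in particular, if λ is self-conjugate then (σ∘π)(λ) = λ. -/

import Mathlib

/-- A partition represented as a weakly decreasing list of positive integers. -/
def IsPartition (l : List ℕ) : Prop :=
  l.Pairwise (· ≥ ·) ∧ ∀ x ∈ l, 0 < x

/-- Sequentially congruent: `λ_i ≡ λ_{i+1} (mod i)` for `1 ≤ i ≤ r-1` and `λ_r ≡ 0 (mod r)`
(0-indexed, with the convention `λ_{r+1} = 0`). -/
def SeqCongruent (l : List ℕ) : Prop :=
  ∀ j < l.length, l.getD j 0 ≡ l.getD (j+1) 0 [MOD j+1]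

/-- The map `π`: `π(λ)_i = i·λ_i + Σ_{j=i+1}^r λ_j` (1-indexed). -/
def piMap (l : List ℕ) : List ℕ :=
  (List.range l.length).map (fun j => (j+1) * l.getD j 0 + (l.drop (j+1)).sum)

/-- The map `σ`: the partition in which `i` occurs with frequency `(φ_i - φ_{i+1})/i`. -/
def sigmaMap (l : List ℕ) : List ℕ :=
  ((List.range l.length).reverse).flatMap
    (fun j => List.replicate ((l.getD j 0 - l.getD (j+1) 0) / (j+1)) (j+1))

/-- The conjugate partition: its `i`-th part is the number of parts of `l` that are `≥ i`. -/
def conj (l : List ℕ) : List ℕ :=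
  (List.range (l.getD 0 0)).map (fun i => l.countP (fun x => decide (i + 1 ≤ x)))

/-- Frequency congruent: each part `i` occurs with frequency divisible by `i`. -/
def FreqCongruent (l : List ℕ) : Prop :=
  ∀ i, 0 < i → i ∣ l.count i


/-- getD is antitone for a sorted (≥) list. -/
theorem getD_anti {l : List ℕ} (hl : l.Pairwise (· ≥ ·)) {i j : ℕ} (hij : i ≤ j) :
    l.getD j 0 ≤ l.getD i 0 := by
  by_cases hj : j < l.length
  · have hi : i < l.length := lt_of_le_of_lt hij hj
    rw [List.getD_eq_getElem _ _ hj, List.getD_eq_getElem _ _ hi]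
    rcases lt_or_eq_of_le hij with h | h
    · exact (List.pairwise_iff_getElem.mp hl) i j hi hj h
    · subst h; exact le_refl _
  · rw [List.getD_eq_default _ _ (le_of_not_gt hj)]; exact Nat.zero_le _

/-- Key counting lemma for sorted lists. -/
theorem countP_sorted {l : List ℕ} (hl : l.Pairwise (· ≥ ·)) {m : ℕ} (hm : 0 < m) (i : ℕ) :
    i < l.countP (fun x => decide (m ≤ x)) ↔ m ≤ l.getD i 0 := by
  induction l generalizing i with
  | nil => simp; omega
  | cons a t ih =>
    have ht : t.Pairwise (· ≥ ·) := hl.of_cons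
    have hmem : ∀ x ∈ t, x ≤ a := fun x hx => (List.pairwise_cons.mp hl).1 x hx
    rw [List.countP_cons]
    by_cases hma : m ≤ a
    · simp only [decide_eq_true hma, if_true]
      cases i with
      | zero => simpa using hma
      | succ i =>
        have := ih ht i
        simp only [List.getD_cons_succ]
        omega
    · have h0 : t.countP (fun x => decide (m ≤ x)) = 0 := by
        rw [List.countP_eq_zero]
        intro x hx
        simp only [decide_eq_true_eq]
        exact fun h => hma (le_trans h (hmem x hx))
      simp only [decide_eq_false hma, Bool.false_eq_true, if_false, h0, Nat.add_zero]
      cases i with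
      | zero => simpa using hma
      | succ i =>
        simp only [List.getD_cons_succ]
        constructor
        · omega
        · intro h
          exfalso
          by_cases hit : i < t.length
          · rw [List.getD_eq_getElem _ _ hit] at h
            exact hma (le_trans h (hmem _ (t.getElem_mem hit)))
          · rw [List.getD_eq_default _ _ (le_of_not_gt hit)] at h; omega

theorem flatMap_congr' {α β : Type} (js : List α) {f g : α → List β}
    (h : ∀ j ∈ js, f j = g j) : js.flatMap f = js.flatMap g := by
  induction js with
  | nil => rfl
  | cons a t ih =>
    simp only [List.flatMap_cons, h a List.mem_cons_self,
      ih (fun j hj => h j (List.mem_cons_of_mem a hj))]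

theorem piMap_length (l : List ℕ) : (piMap l).length = l.length := by
  simp [piMap]

theorem piMap_getD (l : List ℕ) {j : ℕ} (hj : j < l.length) :
    (piMap l).getD j 0 = (j+1) * l.getD j 0 + (l.drop (j+1)).sum := by
  have h : j < (piMap l).length := by rw [piMap_length]; exact hj
  rw [List.getD_eq_getElem _ _ h]
  simp [piMap]

/-- σ∘π in closed form. -/
theorem sigma_pi_eq_F (l : List ℕ) (hl : l.Pairwise (· ≥ ·)) :
    sigmaMap (piMap l) = ((List.range l.length).reverse).flatMap
      (fun j => List.replicate (l.getD j 0 - l.getD (j+1) 0) (j+1)) := by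
  unfold sigmaMap
  rw [piMap_length]
  apply flatMap_congr'
  intro j hj
  have hj' : j < l.length := by
    rw [List.mem_reverse, List.mem_range] at hj; exact hj
  congr 1
  rw [piMap_getD l hj']
  by_cases hj1 : j + 1 < l.length
  · rw [piMap_getD l hj1]
    rw [List.drop_eq_getElem_cons hj1]
    rw [← List.getD_eq_getElem l 0 hj1]
    set a := l.getD j 0 with ha
    set b := l.getD (j+1) 0 with hb
    set s := (l.drop (j+1+1)).sum with hs
    have hab : b ≤ a := getD_anti hl (Nat.le_succ j)
    have hmul : (j+1)*b ≤ (j+1)*a := Nat.mul_le_mul_left _ hab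
    have e2 : (j+1+1)*b = (j+1)*b + b := by ring
    have e1 : (j+1)*a + (b :: l.drop (j+1+1)).sum - ((j+1+1)*b + s) = (j+1)*(a-b) := by
      rw [List.sum_cons, Nat.mul_sub]; omega
    rw [e1, Nat.mul_div_cancel_left _ (Nat.succ_pos j)]
  · have hlen : l.length = j + 1 := by omega
    have h2 : (piMap l).getD (j+1) 0 = 0 :=
      List.getD_eq_default _ _ (by rw [piMap_length]; omega)
    have h3 : l.getD (j+1) 0 = 0 := List.getD_eq_default _ _ (by omega)
    have h4 : (l.drop (j+1)).sum = 0 := by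
      rw [List.drop_eq_nil_of_le (by omega)]; rfl
    rw [h2, h3, h4, Nat.sub_zero, Nat.sub_zero, Nat.add_zero,
      Nat.mul_div_cancel_left _ (Nat.succ_pos j)]

/-- The flatMap of replicates over a sorted list of indices is sorted. -/
theorem sorted_F (d : ℕ → ℕ) (js : List ℕ) (hjs : js.Pairwise (· ≥ ·)) :
    (js.flatMap (fun j => List.replicate (d j) (j+1))).Pairwise (· ≥ ·) := by
  induction js with
  | nil => exact List.Pairwise.nil
  | cons a t ih =>
    rw [List.flatMap_cons]
    rw [List.pairwise_append]
    refine ⟨List.pairwise_replicate.mpr (Or.inr (le_refl _)), ih hjs.of_cons, ?_⟩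
    intro x hx y hy
    rw [List.eq_of_mem_replicate hx]
    rw [List.mem_flatMap] at hy
    obtain ⟨j, hj, hyj⟩ := hy
    rw [List.eq_of_mem_replicate hyj]
    have : a ≥ j := (List.pairwise_cons.mp hjs).1 j hj
    omega

theorem sorted_range_reverse (n : ℕ) : ((List.range n).reverse).Pairwise (· ≥ ·) := by
  rw [List.pairwise_reverse]
  rw [List.pairwise_iff_getElem]
  intro i j hi hj hij
  simp only [List.getElem_range]
  omega

theorem count_F (d : ℕ → ℕ) (v : ℕ) (js : List ℕ) (hjs : js.Nodup) :
    (js.flatMap (fun j => List.replicate (d j) (j+1))).count v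
      = if v - 1 ∈ js ∧ 1 ≤ v then d (v-1) else 0 := by
  induction js with
  | nil => simp
  | cons a t ih =>
    rw [List.flatMap_cons, List.count_append, List.count_replicate,
      ih hjs.of_cons]
    by_cases hav : a + 1 = v
    · have hv : 1 ≤ v := by omega
      have hva : v - 1 = a := by omega
      have hnt : a ∉ t := (List.nodup_cons.mp hjs).1
      rw [if_pos (by simp [hav]), hva, if_neg (by simp [hnt]),
        if_pos (by simp [hv]), Nat.add_zero]
    · have hne : (a + 1 == v) = false := by
        rw [beq_eq_false_iff_ne]; exact hav
      rw [hne]; simp only [Bool.false_eq_true, if_false]; rw [Nat.zero_add]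
      by_cases hv : 1 ≤ v
      · have : (v - 1 ∈ a :: t) ↔ (v - 1 ∈ t) := by
          rw [List.mem_cons]
          constructor
          · rintro (h | h)
            · exfalso; omega
            · exact h
          · exact Or.inr
        rw [if_congr (and_congr_left' this) rfl rfl]
      · simp only [hv, and_false, if_false]

theorem countP_range_Ico (lo hi n : ℕ) :
    (List.range n).countP (fun i => decide (lo ≤ i ∧ i < hi)) = min hi n - min lo n := by
  induction n with
  | zero => simp
  | succ n ih =>
    rw [List.range_succ, List.countP_append, ih]
    have : (List.countP (fun i => decide (lo ≤ i ∧ i < hi)) [n])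
        = if lo ≤ n ∧ n < hi then 1 else 0 := by
      simp [List.countP_cons]
    rw [this]
    split_ifs with h <;> omega

theorem conj_length (l : List ℕ) : (conj l).length = l.getD 0 0 := by
  simp [conj]

theorem conj_getElem (l : List ℕ) {i : ℕ} (hi : i < (conj l).length) :
    (conj l)[i] = l.countP (fun x => decide (i + 1 ≤ x)) := by
  simp [conj]

/-- count of each value in the conjugate partition. -/
theorem count_conj {l : List ℕ} (hl : l.Pairwise (· ≥ ·)) (v : ℕ) :
    (conj l).count v = if 1 ≤ v ∧ v ≤ l.length then l.getD (v-1) 0 - l.getD v 0 else 0 := by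
  have hc : (conj l).count v = (List.range (l.getD 0 0)).countP
      (fun i => l.countP (fun x => decide (i + 1 ≤ x)) == v) := by
    rw [List.count_eq_countP, conj, List.countP_map]
    rfl
  rw [hc]
  by_cases hv1 : 1 ≤ v
  · by_cases hv2 : v ≤ l.length
    · rw [if_pos ⟨hv1, hv2⟩]
      have hcongr : ∀ i ∈ List.range (l.getD 0 0),
          (l.countP (fun x => decide (i + 1 ≤ x)) == v) = true ↔
          (decide (l.getD v 0 ≤ i ∧ i < l.getD (v-1) 0)) = true := by
        intro i _
        rw [beq_iff_eq, decide_eq_true_eq]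
        have h1 : v - 1 < l.countP (fun x => decide (i+1 ≤ x)) ↔ i + 1 ≤ l.getD (v-1) 0 :=
          countP_sorted hl (Nat.succ_pos i) (v-1)
        have h2 : v < l.countP (fun x => decide (i+1 ≤ x)) ↔ i + 1 ≤ l.getD v 0 :=
          countP_sorted hl (Nat.succ_pos i) v
        omega
      rw [List.countP_congr hcongr, countP_range_Ico]
      have hle1 : l.getD (v-1) 0 ≤ l.getD 0 0 := getD_anti hl (Nat.zero_le _)
      have hle2 : l.getD v 0 ≤ l.getD (v-1) 0 := getD_anti hl (by omega)
      omega
    · rw [if_neg (by tauto)]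
      rw [List.countP_eq_zero]
      intro i _
      simp only [beq_iff_eq]
      have := List.countP_le_length (p := fun x => decide (i + 1 ≤ x)) (l := l)
      omega
  · rw [if_neg (by tauto)]
    rw [List.countP_eq_zero]
    intro i hi
    rw [List.mem_range] at hi
    simp only [beq_iff_eq]
    intro hcv
    have hv0 : v = 0 := by omega
    have h1 : 0 < l.countP (fun x => decide (i+1 ≤ x)) ↔ i + 1 ≤ l.getD 0 0 :=
      countP_sorted hl (Nat.succ_pos i) 0
    omega

theorem conj_sorted (l : List ℕ) : (conj l).Pairwise (· ≥ ·) := by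
  rw [List.pairwise_iff_getElem]
  intro i j hi hj hij
  rw [conj_getElem l hi, conj_getElem l hj]
  apply List.countP_mono_left
  intro x _ hx
  simp only [decide_eq_true_eq] at hx ⊢
  omega

theorem conj_pos (l : List ℕ) : ∀ x ∈ conj l, 0 < x := by
  intro x hx
  obtain ⟨i, hi, rfl⟩ := List.getElem_of_mem hx
  rw [conj_getElem l hi]
  rw [List.countP_pos_iff]
  rw [conj_length] at hi
  have hne : 0 < l.length := by
    by_contra h
    rw [List.getD_eq_default _ _ (by omega)] at hi
    omega
  refine ⟨l[0], List.getElem_mem hne, ?_⟩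
  rw [← List.getD_eq_getElem l 0 hne]
  simp only [decide_eq_true_eq]
  omega

theorem sigma_pi_eq_conj (l : List ℕ) (hl : l.Pairwise (· ≥ ·)) :
    sigmaMap (piMap l) = conj l := by
  rw [sigma_pi_eq_F l hl]
  apply List.Perm.eq_of_pairwise'
    (sorted_F _ _ (sorted_range_reverse _)) (conj_sorted l)
  rw [List.perm_iff_count]
  intro v
  rw [count_F _ v _ (List.nodup_reverse.mpr (List.nodup_range (n := _))), count_conj hl v]
  have hmem : v - 1 ∈ (List.range l.length).reverse ↔ v - 1 < l.length := by
    rw [List.mem_reverse, List.mem_range]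
  by_cases hv : 1 ≤ v ∧ v ≤ l.length
  · rw [if_pos ⟨hmem.mpr (by omega), hv.1⟩, if_pos hv]
    have hvv : v - 1 + 1 = v := by omega
    rw [hvv]
  · rw [if_neg (by rw [hmem]; omega), if_neg hv]

theorem conj_conj (l : List ℕ) (hl : IsPartition l) : conj (conj l) = l := by
  rcases eq_or_ne l [] with rfl | hne
  · simp [conj]
  · have hlen : 0 < l.length := List.length_pos_iff.mpr hne
    have h00 : 0 < l.getD 0 0 := by
      rw [List.getD_eq_getElem _ _ hlen]
      exact hl.2 _ (List.getElem_mem hlen)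
    have hclen : (conj l).length = l.getD 0 0 := conj_length l
    have hc0 : (conj l).getD 0 0 = l.length := by
      rw [List.getD_eq_getElem _ _ (by omega), conj_getElem l (by omega)]
      rw [List.countP_eq_length]
      intro x hx
      simp only [decide_eq_true_eq]
      exact hl.2 x hx
    apply List.ext_getElem
    · rw [conj_length, hc0]
    · intro i h1 h2
      rw [conj_getElem _ h1]
      have hil : i < l.length := h2
      unfold conj
      rw [List.countP_map]
      have hcongr : ∀ j ∈ List.range (l.getD 0 0),
          ((fun x => decide (i + 1 ≤ x)) ∘
            (fun j => l.countP (fun x => decide (j + 1 ≤ x)))) j = true ↔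
          (decide (0 ≤ j ∧ j < l.getD i 0)) = true := by
        intro j _
        simp only [Function.comp_apply, decide_eq_true_eq]
        have hC : i < l.countP (fun x => decide (j+1 ≤ x)) ↔ j + 1 ≤ l.getD i 0 :=
          countP_sorted hl.1 (Nat.succ_pos j) i
        omega
      rw [List.countP_congr hcongr, countP_range_Ico]
      have hle : l.getD i 0 ≤ l.getD 0 0 := getD_anti hl.1 (Nat.zero_le _)
      rw [← List.getD_eq_getElem l 0 hil]
      omega

theorem stmt9 (l : List ℕ) (hl : IsPartition l) :
    sigmaMap (piMap (sigmaMap (piMap l))) = l ∧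
      (conj l = l → sigmaMap (piMap l) = l) := by
  constructor
  · rw [sigma_pi_eq_conj l hl.1, sigma_pi_eq_conj (conj l) (conj_sorted l), conj_conj l hl]
  · intro h
    rw [sigma_pi_eq_conj l hl.1, h]
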